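/- Let Ψ_x ∈ Q(n,m) be positive semidefinite on the unit circle. Let K be the set of all Ψ ∈ Q(n,m) such that, for every θ ∈ ℝ, Ψ(θ) is positive semidefinite, Ψ_x(θ) − Ψ(θ) is positive semidefinite, and Ψ_x(θ) − Ψ(θ) is a diagonal matrix. Then there exists Ψ̂ ∈ K such that T(Ψ̂) ≤ T(Ψ) for every Ψ ∈ K; that is, the minimum of T over K is attained. -/

import Mathlib

open Matrix Complex Real
open scoped ComplexOrder

/-- The matrix pseudo-polynomial `θ ↦ Q₀ + ∑_{k=1}^m (e^{-ikθ} • Q_k + e^{ikθ} • Q_kᵀ)`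
with real coefficient matrices `Q 0, …, Q m`. -/
noncomputable def psiOf (n m : ℕ) (Q : Fin (m + 1) → Matrix (Fin n) (Fin n) ℝ) :
    ℝ → Matrix (Fin n) (Fin n) ℂ := fun θ =>
  (Q 0).map (Complex.ofReal) +
    ∑ k : Fin m,
      (Complex.exp (-(Complex.I * ((k.1 : ℂ) + 1) * (θ : ℂ))) •
          (Q k.succ).map Complex.ofReal +
        Complex.exp (Complex.I * ((k.1 : ℂ) + 1) * (θ : ℂ)) •
          ((Q k.succ)ᵀ).map Complex.ofReal)

/-- Membership in the class `Q(n,m)` of matrix pseudo-polynomials with real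
coefficients and symmetric constant coefficient. -/
def memQ (n m : ℕ) (Ψ : ℝ → Matrix (Fin n) (Fin n) ℂ) : Prop :=
  ∃ Q : Fin (m + 1) → Matrix (Fin n) (Fin n) ℝ,
    (Q 0).IsSymm ∧ ∀ θ : ℝ, Ψ θ = psiOf n m Q θ

/-- The normalized trace integral `T(Ψ) = (1/2π) ∫_{-π}^{π} Re tr Ψ(θ) dθ`. -/
noncomputable def traceInt (n : ℕ) (Ψ : ℝ → Matrix (Fin n) (Fin n) ℂ) : ℝ :=
  (1 / (2 * Real.pi)) * ∫ θ in (-Real.pi)..Real.pi, (Matrix.trace (Ψ θ)).re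

section Auxiliary

attribute [local instance] Matrix.normedAddCommGroup

variable {n m : ℕ}

lemma psiOf_apply (Q : Fin (m+1) → Matrix (Fin n) (Fin n) ℝ) (θ : ℝ) (i j : Fin n) :
    psiOf n m Q θ i j = (Q 0 i j : ℂ) +
      ∑ k : Fin m, (Complex.exp (-(Complex.I * ((k.1:ℂ)+1) * θ)) * (Q k.succ i j : ℂ)
        + Complex.exp (Complex.I * ((k.1:ℂ)+1) * θ) * (Q k.succ j i : ℂ)) := by
  simp [psiOf, Matrix.add_apply, Matrix.sum_apply, Matrix.smul_apply, Matrix.map_apply,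
    Matrix.transpose_apply, smul_eq_mul]

lemma integral_exp_I_int (a : ℤ) (ha : a ≠ 0) :
    ∫ θ : ℝ in (-π)..π, Complex.exp (Complex.I * a * θ) = 0 := by
  have hc : (Complex.I * a) ≠ 0 := by
    simp [Complex.I_ne_zero, ha]
  have := integral_exp_mul_complex (a := -π) (b := π) hc
  simp only [mul_assoc] at this ⊢
  rw [this]
  have h2 : Complex.exp (Complex.I * (a * π)) = Complex.exp (Complex.I * (a * (-π : ℝ))) := by
    rw [show (Complex.I * (a * ((-π : ℝ) : ℂ))) = Complex.I * (a * (π:ℝ)) - a * (2 * π * Complex.I) by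
      push_cast; ring, Complex.exp_sub, Complex.exp_int_mul_two_pi_mul_I]
    simp
  rw [h2, sub_self, zero_div]

lemma key_integral (d : ℤ) (c : ℂ) :
    ∫ θ : ℝ in (-π)..π, Complex.exp (Complex.I * d * θ) * c
      = if d = 0 then ((2*π : ℝ) : ℂ) * c else 0 := by
  rw [intervalIntegral.integral_mul_const]
  split_ifs with h
  · subst h
    simp only [Int.cast_zero, mul_zero, zero_mul, Complex.exp_zero]
    rw [intervalIntegral.integral_const]
    push_cast
    ring_nf
    simp [Complex.real_smul]
    ring
  · rw [integral_exp_I_int d h, zero_mul]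

lemma cont_exp_mul (c : ℂ) : Continuous fun θ : ℝ => Complex.exp (c * θ) :=
  Complex.continuous_exp.comp (continuous_const.mul Complex.continuous_ofReal)

lemma recov (Q : Fin (m+1) → Matrix (Fin n) (Fin n) ℝ) (l : Fin (m+1)) (i j : Fin n) :
    ∫ θ : ℝ in (-π)..π, Complex.exp (Complex.I * (l.1:ℂ) * θ) * psiOf n m Q θ i j
      = ((2*π:ℝ):ℂ) * (Q l i j : ℂ) := by
  have hrw : ∀ θ : ℝ, Complex.exp (Complex.I * (l.1:ℂ) * θ) * psiOf n m Q θ i j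
      = Complex.exp (Complex.I * ((l.1:ℤ):ℂ) * θ) * (Q 0 i j : ℂ) +
        ∑ k : Fin m,
          (Complex.exp (Complex.I * ((((l.1:ℤ) - (k.1+1)):ℤ):ℂ) * θ) * (Q k.succ i j : ℂ) +
           Complex.exp (Complex.I * ((((l.1:ℤ) + (k.1+1)):ℤ):ℂ) * θ) * (Q k.succ j i : ℂ)) := by
    intro θ
    rw [psiOf_apply, mul_add, Finset.mul_sum]
    refine congrArg₂ (· + ·) (by norm_cast) (Finset.sum_congr rfl fun k _ => ?_)
    rw [mul_add, ← mul_assoc, ← mul_assoc, ← Complex.exp_add, ← Complex.exp_add]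
    congr 3 <;> (push_cast; ring)
  rw [intervalIntegral.integral_congr (fun θ _ => hrw θ)]
  have hint : ∀ (d : ℤ) (c : ℂ), IntervalIntegrable
      (fun θ : ℝ => Complex.exp (Complex.I * (d:ℂ) * θ) * c) MeasureTheory.volume (-π) π :=
    fun d c => ((cont_exp_mul _).mul continuous_const).intervalIntegrable _ _
  rw [intervalIntegral.integral_add (g := fun θ : ℝ => ∑ k : Fin m, (Complex.exp (Complex.I * ((((l.1:ℤ) - (k.1+1)):ℤ):ℂ) * θ) * (Q k.succ i j : ℂ) + Complex.exp (Complex.I * ((((l.1:ℤ) + (k.1+1)):ℤ):ℂ) * θ) * (Q k.succ j i : ℂ))) (hint _ _)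
    ((continuous_finset_sum _ fun k _ => (((cont_exp_mul _).mul continuous_const).add
      ((cont_exp_mul _).mul continuous_const))).intervalIntegrable _ _),
    intervalIntegral.integral_finset_sum (fun k _ => ((hint _ _).add (hint _ _)))]
  simp_rw [intervalIntegral.integral_add (hint _ _) (hint _ _), key_integral]
  have hne : ∀ k : Fin m, ¬ ((l.1:ℤ) + (k.1+1) = 0) := by
    intro k; omega
  simp only [hne, if_false, add_zero]
  induction l using Fin.cases with
  | zero =>
    rw [if_pos (by simp),
      Finset.sum_eq_zero fun k _ => if_neg (by simp only [Fin.val_zero]; omega), add_zero]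
  | succ k0 =>
    rw [if_neg (by rw [Fin.val_succ]; omega), zero_add,
      Finset.sum_eq_single k0
        (fun k _ hk => if_neg (by rw [Fin.val_succ]; intro hc; exact hk (Fin.ext (by omega))))
        (fun h => absurd (Finset.mem_univ k0) h),
      if_pos (by rw [Fin.val_succ]; omega)]

lemma cont_entry (Q : Fin (m+1) → Matrix (Fin n) (Fin n) ℝ) (i j : Fin n) :
    Continuous fun θ : ℝ => psiOf n m Q θ i j := by
  simp only [psiOf_apply]
  exact continuous_const.add (continuous_finset_sum _ fun k _ =>
    ((Complex.continuous_exp.comp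
        (continuous_const.mul Complex.continuous_ofReal).neg).mul continuous_const).add
      ((Complex.continuous_exp.comp
        (continuous_const.mul Complex.continuous_ofReal)).mul continuous_const))

lemma integral_entry (Q : Fin (m+1) → Matrix (Fin n) (Fin n) ℝ) (i j : Fin n) :
    ∫ θ : ℝ in (-π)..π, psiOf n m Q θ i j = ((2*π:ℝ):ℂ) * (Q 0 i j : ℂ) := by
  have := recov Q 0 i j
  simpa using this

lemma traceInt_eq (Q : Fin (m+1) → Matrix (Fin n) (Fin n) ℝ)
    (Ψ : ℝ → Matrix (Fin n) (Fin n) ℂ) (hΨ : ∀ θ, Ψ θ = psiOf n m Q θ) :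
    traceInt n Ψ = Matrix.trace (Q 0) := by
  have hTint : IntervalIntegrable (fun θ => Matrix.trace (psiOf n m Q θ))
      MeasureTheory.volume (-π) π := by
    have : Continuous fun θ => Matrix.trace (psiOf n m Q θ) := by
      simp only [Matrix.trace, Matrix.diag]
      exact continuous_finset_sum _ fun i _ => cont_entry Q i i
    exact this.intervalIntegrable _ _
  have h1 : (∫ θ in (-π)..π, Matrix.trace (psiOf n m Q θ))
      = ((2*π:ℝ):ℂ) * ((Matrix.trace (Q 0) : ℝ) : ℂ) := by
    simp only [Matrix.trace, Matrix.diag]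
    rw [intervalIntegral.integral_finset_sum
      (fun i _ => (cont_entry Q i i).intervalIntegrable _ _)]
    simp only [integral_entry]
    rw [← Finset.mul_sum]
    push_cast
    ring
  have h2 : ∫ θ in (-π)..π, (Matrix.trace (Ψ θ)).re
      = (2*π) * Matrix.trace (Q 0) := by
    have hcongr : ∀ θ ∈ Set.uIcc (-π) π, (Matrix.trace (Ψ θ)).re
        = Complex.reCLM (Matrix.trace (psiOf n m Q θ)) := by
      intro θ _; rw [hΨ θ]; rfl
    rw [intervalIntegral.integral_congr hcongr,
      Complex.reCLM.intervalIntegral_comp_comm hTint, h1]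
    simp [← Complex.ofReal_mul]
  unfold traceInt
  rw [h2]
  field_simp

lemma psd_diag_nonneg {A : Matrix (Fin n) (Fin n) ℂ} (h : A.PosSemidef) (i : Fin n) :
    0 ≤ A i i := by
  have h1 := h.dotProduct_mulVec_nonneg (Pi.single i 1)
  have h2 : star (Pi.single i (1:ℂ)) ⬝ᵥ (A *ᵥ Pi.single i 1) = A i i := by
    simp [Matrix.mulVec_single, dotProduct, Pi.single_apply, apply_ite]
  rwa [h2] at h1

lemma entry_bound {A B : Matrix (Fin n) (Fin n) ℂ} (hA : A.PosSemidef)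
    (hBA : (B - A).PosSemidef) (hdiag : (B - A).IsDiag) {C : ℝ}
    (hB : ∀ i j, ‖B i j‖ ≤ C) : ∀ i j, ‖A i j‖ ≤ C := by
  intro i j
  by_cases hij : i = j
  · subst hij
    have h0 : 0 ≤ A i i := psd_diag_nonneg hA i
    have h1 : 0 ≤ B i i - A i i := by
      have := psd_diag_nonneg hBA i
      simpa [Matrix.sub_apply] using this
    obtain ⟨hre, him⟩ := Complex.nonneg_iff.mp h0
    have h2 : (A i i).re ≤ (B i i).re := by
      have := (Complex.nonneg_iff.mp h1).1
      simp only [Complex.sub_re] at this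
      linarith
    calc ‖A i i‖ = |(A i i).re| := by
          rw [show A i i = ((A i i).re : ℂ) from Complex.ext rfl (by simp [← him])]
          simp [Complex.norm_real]
      _ = (A i i).re := abs_of_nonneg hre
      _ ≤ (B i i).re := h2
      _ ≤ ‖B i i‖ := Complex.re_le_norm _
      _ ≤ C := hB i i
  · have hz : B i j - A i j = 0 := by
      have := hdiag hij
      simpa [Matrix.sub_apply] using this
    rw [show A i j = B i j from (sub_eq_zero.mp hz).symm]
    exact hB i j

lemma psiOf_entry_bound (P : Fin (m+1) → Matrix (Fin n) (Fin n) ℝ) (θ : ℝ) (i j : Fin n) :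
    ‖psiOf n m P θ i j‖ ≤ ∑ l : Fin (m+1), 2 * ‖P l‖ := by
  rw [psiOf_apply]
  have hexp : ∀ c : ℂ, c.re = 0 → ‖Complex.exp c‖ = 1 := fun c hc => by
    rw [Complex.norm_exp, hc, Real.exp_zero]
  refine le_trans (norm_add_le _ _) ?_
  have h0 : ‖((P 0 i j : ℝ) : ℂ)‖ ≤ 2 * ‖P 0‖ := by
    rw [Complex.norm_real]
    have h := Matrix.norm_entry_le_entrywise_sup_norm (P 0) (i := i) (j := j)
    have hn : (0:ℝ) ≤ ‖P 0‖ := norm_nonneg _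
    linarith
  have hsum : ‖∑ k : Fin m,
      (Complex.exp (-(Complex.I * ((k.1:ℂ)+1) * θ)) * (P k.succ i j : ℂ)
        + Complex.exp (Complex.I * ((k.1:ℂ)+1) * θ) * (P k.succ j i : ℂ))‖
      ≤ ∑ k : Fin m, 2 * ‖P k.succ‖ := by
    refine le_trans (norm_sum_le _ _) (Finset.sum_le_sum fun k _ => ?_)
    refine le_trans (norm_add_le _ _) ?_
    rw [norm_mul, norm_mul, hexp _ (by simp), hexp _ (by simp), one_mul, one_mul,
      Complex.norm_real, Complex.norm_real]
    have h1 := Matrix.norm_entry_le_entrywise_sup_norm (P k.succ) (i := i) (j := j)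
    have h2 := Matrix.norm_entry_le_entrywise_sup_norm (P k.succ) (i := j) (j := i)
    linarith
  calc ‖((P 0 i j : ℝ) : ℂ)‖ + ‖∑ k : Fin m,
      (Complex.exp (-(Complex.I * ((k.1:ℂ)+1) * θ)) * (P k.succ i j : ℂ)
        + Complex.exp (Complex.I * ((k.1:ℂ)+1) * θ) * (P k.succ j i : ℂ))‖
      ≤ 2 * ‖P 0‖ + ∑ k : Fin m, 2 * ‖P k.succ‖ := add_le_add h0 hsum
    _ = ∑ l : Fin (m+1), 2 * ‖P l‖ := by rw [Fin.sum_univ_succ]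

lemma coeff_bound {Q : Fin (m+1) → Matrix (Fin n) (Fin n) ℝ} {C : ℝ}
    (hC : ∀ (θ : ℝ) (i j : Fin n), ‖psiOf n m Q θ i j‖ ≤ C) (l : Fin (m+1)) (i j : Fin n) :
    |Q l i j| ≤ C := by
  have h := recov Q l i j
  have hπ : 0 < π := Real.pi_pos
  have hb : ‖((2*π:ℝ):ℂ) * (Q l i j : ℂ)‖ ≤ C * |π - (-π)| := by
    rw [← h]
    refine intervalIntegral.norm_integral_le_of_norm_le_const fun θ _ => ?_
    rw [norm_mul]
    have hone : ‖Complex.exp (Complex.I * (l.1:ℂ) * θ)‖ = 1 := by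
      rw [Complex.norm_exp]
      simp [Complex.mul_re]
    rw [hone, one_mul]
    exact hC θ i j
  rw [norm_mul, Complex.norm_real, Complex.norm_real, Real.norm_eq_abs, Real.norm_eq_abs,
    abs_of_pos (by linarith)] at hb
  have habs : |π - (-π)| = 2*π := by
    rw [abs_of_pos (by linarith)]; ring
  rw [habs] at hb
  nlinarith [abs_nonneg (Q l i j)]

lemma isClosed_posSemidef {X : Type*} [TopologicalSpace X]
    {f : X → Matrix (Fin n) (Fin n) ℂ} (hf : Continuous f) :
    IsClosed {x | (f x).PosSemidef} := by
  have hset : {x | (f x).PosSemidef} =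
      {x | (f x)ᴴ = f x} ∩ ⋂ v : Fin n → ℂ, {x | 0 ≤ star v ⬝ᵥ (f x) *ᵥ v} := by
    ext x
    simp only [Set.mem_setOf_eq, Set.mem_inter_iff, Set.mem_iInter]
    exact Matrix.posSemidef_iff_dotProduct_mulVec
  rw [hset]
  refine (isClosed_eq hf.matrix_conjTranspose hf).inter (isClosed_iInter fun v => ?_)
  have hquad : Continuous fun x => star v ⬝ᵥ (f x) *ᵥ v :=
    continuous_const.dotProduct (hf.matrix_mulVec continuous_const)
  have hset2 : {x | 0 ≤ star v ⬝ᵥ (f x) *ᵥ v} =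
      {x | 0 ≤ (star v ⬝ᵥ (f x) *ᵥ v).re} ∩ {x | (star v ⬝ᵥ (f x) *ᵥ v).im = 0} := by
    ext x
    rw [Set.mem_setOf_eq, Complex.nonneg_iff]
    simp [eq_comm]
  rw [hset2]
  exact (isClosed_le continuous_const (Complex.continuous_re.comp hquad)).inter
    (isClosed_eq (Complex.continuous_im.comp hquad) continuous_const)

lemma isClosed_isDiag {X : Type*} [TopologicalSpace X]
    {f : X → Matrix (Fin n) (Fin n) ℂ} (hf : Continuous f) :
    IsClosed {x | (f x).IsDiag} := by
  have hset : {x | (f x).IsDiag} = ⋂ i, ⋂ j, {x | i ≠ j → f x i j = 0} := by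
    ext x
    simp only [Set.mem_setOf_eq, Set.mem_iInter, Matrix.IsDiag]
    exact ⟨fun h i j hij => h hij, fun h i j hij => h i j hij⟩
  rw [hset]
  refine isClosed_iInter fun i => isClosed_iInter fun j => ?_
  by_cases hij : i = j
  · have : {x | i ≠ j → f x i j = 0} = Set.univ := by ext x; simp [hij]
    rw [this]; exact isClosed_univ
  · have : {x | i ≠ j → f x i j = 0} = {x | f x i j = 0} := by ext x; simp [hij]
    rw [this]; exact isClosed_eq (hf.matrix_elem i j) continuous_const

lemma contQ (θ : ℝ) :
    Continuous fun Q : Fin (m+1) → Matrix (Fin n) (Fin n) ℝ => psiOf n m Q θ := by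
  unfold psiOf
  exact ((continuous_apply 0).matrix_map Complex.continuous_ofReal).fun_add
    (continuous_finset_sum _ fun k _ =>
      ((continuous_const.fun_smul ((continuous_apply k.succ).matrix_map Complex.continuous_ofReal)).fun_add
        (continuous_const.fun_smul (((continuous_apply k.succ).matrix_transpose).matrix_map
          Complex.continuous_ofReal))))

end Auxiliary

section MainProof

attribute [local instance] Matrix.normedAddCommGroup Matrix.normedSpace

/-- (Proposition on existence.) If `Ψ_x ∈ Q(n,m)` is positive
semidefinite on the unit circle, the minimum of the trace integral `T` over the
feasible set `K` of the relaxed problem is attained. -/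
theorem exists_minimizer_trace_integral
    (n m : ℕ) (hn : 0 < n) (hm : 0 < m)
    (Ψx : ℝ → Matrix (Fin n) (Fin n) ℂ)
    (hΨx : memQ n m Ψx) (hpsd : ∀ θ : ℝ, (Ψx θ).PosSemidef)
    (K : Set (ℝ → Matrix (Fin n) (Fin n) ℂ))
    (hK : K = {Ψ : ℝ → Matrix (Fin n) (Fin n) ℂ | memQ n m Ψ ∧
        ∀ θ : ℝ, (Ψ θ).PosSemidef ∧ (Ψx θ - Ψ θ).PosSemidef ∧ (Ψx θ - Ψ θ).IsDiag}) :
    ∃ Ψopt ∈ K, ∀ Ψ ∈ K, traceInt n Ψopt ≤ traceInt n Ψ := by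
  classical
  obtain ⟨P, hPsymm, hP⟩ := hΨx
  set S : Set (Fin (m+1) → Matrix (Fin n) (Fin n) ℝ) :=
    {Q | (Q 0).IsSymm ∧ ∀ θ : ℝ, (psiOf n m Q θ).PosSemidef ∧
      (Ψx θ - psiOf n m Q θ).PosSemidef ∧ (Ψx θ - psiOf n m Q θ).IsDiag} with hSdef
  set C : ℝ := ∑ l : Fin (m+1), 2 * ‖P l‖ with hCdef
  have hC0 : 0 ≤ C := Finset.sum_nonneg fun l _ => by positivity
  have hΨxbound : ∀ (θ : ℝ) (i j : Fin n), ‖Ψx θ i j‖ ≤ C := fun θ i j => by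
    rw [hP θ]; exact psiOf_entry_bound P θ i j
  have hQbound : ∀ Q ∈ S, ∀ (l : Fin (m+1)) (i j : Fin n), |Q l i j| ≤ C := by
    intro Q hQ l i j
    refine coeff_bound (fun θ i' j' => ?_) l i j
    exact entry_bound (hQ.2 θ).1 (hQ.2 θ).2.1 (hQ.2 θ).2.2 (fun a b => hΨxbound θ a b) i' j'
  have hS_sub : S ⊆ Metric.closedBall 0 C := by
    intro Q hQ
    rw [Metric.mem_closedBall, dist_zero_right, pi_norm_le_iff_of_nonneg hC0]
    intro k
    rw [Matrix.norm_le_iff hC0]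
    intro i j
    simpa [Real.norm_eq_abs] using hQbound Q hQ k i j
  have hS_closed : IsClosed S := by
    have hrw : S = {Q : Fin (m+1) → Matrix (Fin n) (Fin n) ℝ | (Q 0).IsSymm} ∩
        ⋂ θ : ℝ, ({Q | (psiOf n m Q θ).PosSemidef} ∩
          ({Q | (Ψx θ - psiOf n m Q θ).PosSemidef} ∩ {Q | (Ψx θ - psiOf n m Q θ).IsDiag})) := by
      ext Q
      simp only [hSdef, Set.mem_setOf_eq, Set.mem_inter_iff, Set.mem_iInter]
    rw [hrw]
    have h1 : IsClosed {Q : Fin (m+1) → Matrix (Fin n) (Fin n) ℝ | (Q 0).IsSymm} :=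
      isClosed_eq ((continuous_apply 0).matrix_transpose) (continuous_apply 0)
    refine h1.inter (isClosed_iInter fun θ => ?_)
    have hfc : Continuous fun Q : Fin (m+1) → Matrix (Fin n) (Fin n) ℝ =>
        Ψx θ - psiOf n m Q θ := continuous_const.sub (contQ θ)
    exact (isClosed_posSemidef (contQ θ)).inter
      ((isClosed_posSemidef hfc).inter (isClosed_isDiag hfc))
  have hS_compact : IsCompact S :=
    (isCompact_closedBall (0 : Fin (m+1) → Matrix (Fin n) (Fin n) ℝ) C).of_isClosed_subset
      hS_closed hS_sub
  have hS_ne : S.Nonempty := by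
    refine ⟨P, hPsymm, fun θ => ?_⟩
    rw [← hP θ]
    refine ⟨hpsd θ, ?_, ?_⟩
    · rw [sub_self]; exact Matrix.PosSemidef.zero
    · rw [sub_self]; exact Matrix.isDiag_zero
  have hf_cont : Continuous fun Q : Fin (m+1) → Matrix (Fin n) (Fin n) ℝ =>
      Matrix.trace (Q 0) := (continuous_apply 0).matrix_trace
  obtain ⟨Qopt, hQoptS, hQopt_min⟩ := hS_compact.exists_isMinOn hS_ne hf_cont.continuousOn
  refine ⟨psiOf n m Qopt, ?_, ?_⟩
  · rw [hK]
    exact ⟨⟨Qopt, hQoptS.1, fun θ => rfl⟩, hQoptS.2⟩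
  · intro Ψ hΨ
    rw [hK] at hΨ
    obtain ⟨⟨Q, hQsymm, hQeq⟩, hconstr⟩ := hΨ
    have hQS : Q ∈ S := ⟨hQsymm, fun θ => by rw [← hQeq θ]; exact hconstr θ⟩
    rw [traceInt_eq Qopt _ (fun θ => rfl), traceInt_eq Q Ψ hQeq]
    exact hQopt_min hQS

end MainProof
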